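/- arXiv:2203.11847 — 7 statements merged into one kernel-verified Lean document; each statement's English description precedes it below -/
import Mathlib

section
/- For all p, q ∈ (0,1) with p ≠ q, the minimizer x* of the function x ↦ p^x q^{1−x} + (1−p)^x (1−q)^{1−x} over [0,1] satisfies 0 < x* < 1. More precisely, the minimum value of this function over [0,1] is strictly less than 1, while the values at x = 0 and x = 1 both equal 1. -/
open Set

theorem interior_minimizer (p q : ℝ) (hp : p ∈ Ioo (0:ℝ) 1) (hq : q ∈ Ioo (0:ℝ) 1)
    (hpq : p ≠ q) :
    sInf ((fun x : ℝ => p ^ x * q ^ (1 - x) + (1 - p) ^ x * (1 - q) ^ (1 - x)) '' Icc 0 1) < 1 ∧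
    (fun x : ℝ => p ^ x * q ^ (1 - x) + (1 - p) ^ x * (1 - q) ^ (1 - x)) 0 = 1 ∧
    (fun x : ℝ => p ^ x * q ^ (1 - x) + (1 - p) ^ x * (1 - q) ^ (1 - x)) 1 = 1 ∧
    ∀ x ∈ Icc (0:ℝ) 1,
      IsMinOn (fun x : ℝ => p ^ x * q ^ (1 - x) + (1 - p) ^ x * (1 - q) ^ (1 - x))
        (Icc 0 1) x → 0 < x ∧ x < 1 := by
  obtain ⟨hp0, hp1⟩ := hp
  obtain ⟨hq0, hq1⟩ := hq
  set f : ℝ → ℝ := fun x : ℝ => p ^ x * q ^ (1 - x) + (1 - p) ^ x * (1 - q) ^ (1 - x) with hf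
  have hp0' : (0:ℝ) ≤ p := hp0.le
  have hq0' : (0:ℝ) ≤ q := hq0.le
  have hp1' : (0:ℝ) ≤ 1 - p := by linarith
  have hq1' : (0:ℝ) ≤ 1 - q := by linarith
  -- value at 1/2
  have hhalf : f (1/2) < 1 := by
    have e : f (1/2) = Real.sqrt p * Real.sqrt q + Real.sqrt (1-p) * Real.sqrt (1-q) := by
      simp only [hf]
      rw [Real.sqrt_eq_rpow, Real.sqrt_eq_rpow, Real.sqrt_eq_rpow, Real.sqrt_eq_rpow]
      norm_num
    have h1 : Real.sqrt p ≠ Real.sqrt q := fun h => hpq (by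
      have := congrArg (fun t => t^2) h
      simpa [Real.sq_sqrt hp0', Real.sq_sqrt hq0'] using this)
    have s1 : Real.sqrt p ^ 2 = p := Real.sq_sqrt hp0'
    have s2 : Real.sqrt q ^ 2 = q := Real.sq_sqrt hq0'
    have s3 : Real.sqrt (1-p) ^ 2 = 1 - p := Real.sq_sqrt hp1'
    have s4 : Real.sqrt (1-q) ^ 2 = 1 - q := Real.sq_sqrt hq1'
    have t1 : (0:ℝ) < (Real.sqrt p - Real.sqrt q)^2 := pow_two_pos_of_ne_zero (sub_ne_zero.mpr h1)
    have t2 : (0:ℝ) ≤ (Real.sqrt (1-p) - Real.sqrt (1-q))^2 := sq_nonneg _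
    rw [e]; nlinarith [t1, t2]
  have hmem : f (1/2) ∈ f '' Icc (0:ℝ) 1 := ⟨1/2, by norm_num, rfl⟩
  have hbdd : BddBelow (f '' Icc (0:ℝ) 1) := by
    refine ⟨0, ?_⟩
    rintro y ⟨x, -, rfl⟩
    have : (0:ℝ) ≤ f x := by
      simp only [hf]
      positivity
    exact this
  have hinf : sInf (f '' Icc (0:ℝ) 1) ≤ f (1/2) := csInf_le hbdd hmem
  refine ⟨lt_of_le_of_lt hinf hhalf, ?_, ?_, ?_⟩
  · simp [hf]
  · simp [hf]
  · rintro x ⟨hx0, hx1⟩ hmin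
    have hle : f x ≤ f (1/2) := hmin (by norm_num : (1/2:ℝ) ∈ Icc (0:ℝ) 1)
    constructor
    · rcases hx0.lt_or_eq with h | h
      · exact h
      · exfalso
        have : f 0 = 1 := by simp [hf]
        rw [← h, this] at hle
        linarith
    · rcases hx1.lt_or_eq with h | h
      · exact h
      · exfalso
        have : f 1 = 1 := by simp [hf]
        rw [h, this] at hle
        linarith
end

section
/- Let 0 < b < a. For any t > a and x ∈ [0,1], define g(t,x) = t − a^x b^{1−x} − (t−a)^x (t−b)^{1−x}. Then for each fixed x ∈ [0,1], g(t,x) is nonincreasing in t on (a, ∞); in particular its partial derivative in t, 1 − x·((t−b)/(t−a))^{1−x} − (1−x)·((t−a)/(t−b))^x, is ≤ 0. -/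
open Set

private lemma key_ineq (b x t A : ℝ) (hba : b < A) (hx : x ∈ Icc (0:ℝ) 1) (ht : A < t) :
    1 ≤ x * ((t - b) / (t - A)) ^ (1 - x) + (1 - x) * ((t - A) / (t - b)) ^ x := by
  obtain ⟨hx0, hx1⟩ := hx
  have hta : (0:ℝ) < t - A := by linarith
  have htb : (0:ℝ) < t - b := by linarith
  set r := (t - b) / (t - A) with hr
  have hrpos : 0 < r := div_pos htb hta
  have hinv : (t - A) / (t - b) = r⁻¹ := by rw [hr, inv_div]
  rw [hinv]
  have hgm := Real.geom_mean_le_arith_mean2_weighted hx0 (by linarith : (0:ℝ) ≤ 1 - x)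
    (Real.rpow_nonneg hrpos.le (1-x)) (Real.rpow_nonneg (inv_pos.mpr hrpos).le x)
    (by ring)
  calc (1:ℝ) = (r ^ (1-x)) ^ x * (r⁻¹ ^ x) ^ (1-x) := by
        rw [← Real.rpow_mul hrpos.le, Real.inv_rpow hrpos.le, ← Real.rpow_neg hrpos.le,
          ← Real.rpow_mul hrpos.le, ← Real.rpow_add hrpos]
        rw [show (1-x)*x + -x*(1-x) = 0 by ring, Real.rpow_zero]
      _ ≤ _ := hgm

theorem g_antitone_in_t (a b x : ℝ) (hb : 0 < b) (hba : b < a) (hx : x ∈ Icc (0:ℝ) 1) :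
    AntitoneOn (fun t : ℝ => t - a ^ x * b ^ (1 - x) - (t - a) ^ x * (t - b) ^ (1 - x))
      (Ioi a) ∧
    ∀ t : ℝ, a < t →
      1 - x * ((t - b) / (t - a)) ^ (1 - x) - (1 - x) * ((t - a) / (t - b)) ^ x ≤ 0 := by
  obtain ⟨hx0, hx1⟩ := hx
  set f : ℝ → ℝ := fun t => t - a ^ x * b ^ (1 - x) - (t - a) ^ x * (t - b) ^ (1 - x) with hf
  -- derivative of f at any t > a
  have hderiv : ∀ t : ℝ, a < t → HasDerivAt f
      (1 - (1 * x * (t - a) ^ (x - 1) * ((t - b) ^ (1 - x)) +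
        (t - a) ^ x * (1 * (1 - x) * (t - b) ^ (1 - x - 1)))) t := by
    intro t ht
    have hta : t - a ≠ 0 := by intro h; nlinarith [ht]
    have htb : t - b ≠ 0 := by intro h; nlinarith [ht, hba]
    have h1 : HasDerivAt (fun s : ℝ => (s - a) ^ x) (1 * x * (t - a) ^ (x - 1)) t :=
      ((hasDerivAt_id t).sub_const a).rpow_const (Or.inl hta)
    have h2 : HasDerivAt (fun s : ℝ => (s - b) ^ (1 - x)) (1 * (1 - x) * (t - b) ^ (1 - x - 1)) t :=
      ((hasDerivAt_id t).sub_const b).rpow_const (Or.inl htb)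
    have h3 := h1.mul h2
    have h4 := (((hasDerivAt_id t).sub_const (a ^ x * b ^ (1 - x))).sub h3)
    exact h4
  -- deriv is nonpositive on Ioi a
  have hD : ∀ t : ℝ, a < t →
      1 - (1 * x * (t - a) ^ (x - 1) * ((t - b) ^ (1 - x)) +
        (t - a) ^ x * (1 * (1 - x) * (t - b) ^ (1 - x - 1))) ≤ 0 := by
    intro t ht
    have hta : (0:ℝ) < t - a := by linarith
    have htb : (0:ℝ) < t - b := by linarith
    have hk := key_ineq b x t a hba ⟨hx0, hx1⟩ ht
    have e1 : ((t - b) / (t - a)) ^ (1 - x) = (t - a) ^ (x - 1) * (t - b) ^ (1 - x) := by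
      rw [Real.div_rpow htb.le hta.le, show x - 1 = -(1 - x) by ring,
        Real.rpow_neg hta.le, div_eq_mul_inv, mul_comm]
    have e2 : ((t - a) / (t - b)) ^ x = (t - a) ^ x * (t - b) ^ (1 - x - 1) := by
      rw [Real.div_rpow hta.le htb.le, show (1:ℝ) - x - 1 = -x by ring,
        Real.rpow_neg htb.le, div_eq_mul_inv]
    rw [e1, e2] at hk
    nlinarith [hk]
  constructor
  · apply antitoneOn_of_deriv_nonpos (convex_Ioi a)
    · intro t ht
      exact ((hderiv t ht).continuousAt).continuousWithinAt
    · intro t ht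
      rw [interior_Ioi] at ht
      exact (hderiv t ht).differentiableAt.differentiableWithinAt
    · intro t ht
      rw [interior_Ioi] at ht
      rw [(hderiv t ht).deriv]
      exact hD t ht
  · intro t ht
    have hk := key_ineq b x t a hba ⟨hx0, hx1⟩ ht
    linarith
end

section
/- Let 0 < b < a. Then lim_{t → a⁺} max_{x∈[0,1]} (t − a^x b^{1−x} − (t−a)^x (t−b)^{1−x}) = a − b. -/
open Set Filter

theorem max_g_tendsto_right (a b : ℝ) (hb : 0 < b) (hba : b < a) :
    Tendsto
      (fun t : ℝ => sSup ((fun x : ℝ =>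
        t - a ^ x * b ^ (1 - x) - (t - a) ^ x * (t - b) ^ (1 - x)) '' Icc 0 1))
      (nhdsWithin a (Ioi a)) (nhds (a - b)) := by
  have ha : (0:ℝ) < a := hb.trans hba
  have hub : ∀ t : ℝ, a < t → ∀ x ∈ Icc (0:ℝ) 1,
      t - a ^ x * b ^ (1 - x) - (t - a) ^ x * (t - b) ^ (1 - x) ≤ t - b := by
    intro t ht x hx
    have hbb : b ^ x * b ^ (1 - x) = b := by
      rw [← Real.rpow_add hb]; norm_num
    have h2 : b ^ x ≤ a ^ x := Real.rpow_le_rpow hb.le hba.le hx.1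
    have h1 : b ≤ a ^ x * b ^ (1 - x) := by
      nlinarith [Real.rpow_nonneg hb.le (1 - x), Real.rpow_nonneg hb.le x]
    have h3 : 0 ≤ (t - a) ^ x * (t - b) ^ (1 - x) :=
      mul_nonneg (Real.rpow_nonneg (by linarith) x)
        (Real.rpow_nonneg (by linarith) (1 - x))
    linarith
  have hbdd : ∀ t : ℝ, a < t → BddAbove ((fun x : ℝ =>
      t - a ^ x * b ^ (1 - x) - (t - a) ^ x * (t - b) ^ (1 - x)) '' Icc 0 1) := by
    intro t ht
    exact ⟨t - b, by rintro y ⟨x, hx, rfl⟩; exact hub t ht x hx⟩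
  have hne : ∀ t : ℝ, ((fun x : ℝ =>
      t - a ^ x * b ^ (1 - x) - (t - a) ^ x * (t - b) ^ (1 - x)) '' Icc 0 1).Nonempty :=
    fun t => ⟨_, mem_image_of_mem _ (left_mem_Icc.2 zero_le_one)⟩
  rw [tendsto_order]
  constructor
  · -- lower bound
    intro c hc
    set ε := a - b - c with hε
    have hεpos : 0 < ε := by simp [hε]; linarith
    -- find x₀ ∈ (0,1] with a^x₀ * b^(1-x₀) < b + ε/2
    have hcont : ContinuousAt (fun x : ℝ => a ^ x * b ^ (1 - x)) 0 := by
      apply ContinuousAt.mul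
      · exact Real.continuousAt_const_rpow ha.ne'
      · exact (Real.continuousAt_const_rpow hb.ne').comp (by fun_prop)
    have hval : (fun x : ℝ => a ^ x * b ^ (1 - x)) 0 = b := by
      simp [Real.rpow_zero]
    have hev : ∀ᶠ x in nhdsWithin (0:ℝ) (Ioi 0),
        a ^ x * b ^ (1 - x) < b + ε / 2 ∧ x ∈ Ioc (0:ℝ) 1 := by
      have h1 : ∀ᶠ x in nhds (0:ℝ), a ^ x * b ^ (1 - x) < b + ε / 2 := by
        have h : Tendsto (fun x : ℝ => a ^ x * b ^ (1 - x)) (nhds 0) (nhds b) := by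
          simpa [hval] using hcont.tendsto
        exact h (Iio_mem_nhds (by linarith))
      have h2 : ∀ᶠ x in nhds (0:ℝ), x < 1 := eventually_lt_nhds zero_lt_one
      filter_upwards [nhdsWithin_le_nhds h1, nhdsWithin_le_nhds h2,
        self_mem_nhdsWithin] with x hx1 hx2 hx3
      exact ⟨hx1, hx3, hx2.le⟩
    obtain ⟨x₀, hx₀lt, hx₀mem⟩ := hev.exists
    have hx₀pos : 0 < x₀ := hx₀mem.1
    -- the value at x₀ tends to a - a^x₀ b^(1-x₀) > c
    have hprod : Tendsto (fun t : ℝ => (t - a) ^ x₀ * (t - b) ^ (1 - x₀))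
        (nhdsWithin a (Ioi a)) (nhds 0) := by
      have hc1 : Tendsto (fun t : ℝ => (t - a) ^ x₀) (nhds a) (nhds 0) := by
        have h0 : Tendsto (fun t : ℝ => t - a) (nhds a) (nhds 0) := by
          have h0' : Tendsto (fun t : ℝ => t - a) (nhds a) (nhds (a - a)) :=
            ((continuous_id (X := ℝ)).sub continuous_const).tendsto a
          rwa [sub_self] at h0'
        have := (Real.continuousAt_rpow_const 0 x₀ (Or.inr hx₀pos.le)).tendsto.comp h0
        simpa [Function.comp_def, Real.zero_rpow hx₀pos.ne'] using this
      have hc2 : Tendsto (fun t : ℝ => (t - b) ^ (1 - x₀)) (nhds a)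
          (nhds ((a - b) ^ (1 - x₀))) := by
        have h0 : Tendsto (fun t : ℝ => t - b) (nhds a) (nhds (a - b)) :=
          ((continuous_id (X := ℝ)).sub continuous_const).tendsto a
        exact (Real.continuousAt_rpow_const (a - b) (1 - x₀)
          (Or.inl (by intro h; linarith [sub_pos.2 hba, h ▸ sub_pos.2 hba]))).tendsto.comp h0
      have := hc1.mul hc2
      rw [zero_mul] at this
      exact this.mono_left nhdsWithin_le_nhds
    have htend : Tendsto (fun t : ℝ =>
        t - a ^ x₀ * b ^ (1 - x₀) - (t - a) ^ x₀ * (t - b) ^ (1 - x₀))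
        (nhdsWithin a (Ioi a)) (nhds (a - a ^ x₀ * b ^ (1 - x₀) - 0)) := by
      apply Tendsto.sub _ hprod
      exact (tendsto_id.mono_left nhdsWithin_le_nhds).sub_const _
    have hgt : c < a - a ^ x₀ * b ^ (1 - x₀) - 0 := by
      have := hx₀lt
      simp only [sub_zero]
      linarith
    have hev2 : ∀ᶠ t in nhdsWithin a (Ioi a),
        c < t - a ^ x₀ * b ^ (1 - x₀) - (t - a) ^ x₀ * (t - b) ^ (1 - x₀) :=
      htend (Ioi_mem_nhds hgt)
    filter_upwards [hev2, self_mem_nhdsWithin] with t ht1 ht2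
    calc c < t - a ^ x₀ * b ^ (1 - x₀) - (t - a) ^ x₀ * (t - b) ^ (1 - x₀) := ht1
    _ ≤ _ := le_csSup (hbdd t ht2) ⟨x₀, Ioc_subset_Icc_self hx₀mem, rfl⟩
  · -- upper bound
    intro c hc
    have h1 : ∀ᶠ t in nhdsWithin a (Ioi a), t < c + b :=
      nhdsWithin_le_nhds (Iio_mem_nhds (by linarith))
    filter_upwards [h1, self_mem_nhdsWithin] with t ht1 ht2
    have : sSup _ ≤ t - b := csSup_le (hne t) (by rintro y ⟨x, hx, rfl⟩; exact hub t ht2 x hx)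
    linarith
end

section
/- Let a, b > 0 with a ≠ b. Then lim_{t → ∞} max_{x∈[0,1]} (t − a^x b^{1−x} − (t−a)^x (t−b)^{1−x}) = f(a,b), where f(a,b) = a − ((a−b)/(log a − log b)) · log(e·a·(log a − log b)/(a−b)). -/
open Set Filter

private lemma log_ne_log (a b : ℝ) (ha : 0 < a) (hb : 0 < b) (hab : a ≠ b) :
    Real.log a ≠ Real.log b := by
  intro h
  apply hab
  have := congrArg Real.exp h
  rwa [Real.exp_log ha, Real.exp_log hb] at this

private lemma img_symm (a b t : ℝ) :
    ((fun x : ℝ => t - a ^ x * b ^ (1 - x) - (t - a) ^ x * (t - b) ^ (1 - x)) '' Icc 0 1) =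
    ((fun x : ℝ => t - b ^ x * a ^ (1 - x) - (t - b) ^ x * (t - a) ^ (1 - x)) '' Icc 0 1) := by
  have h : ∀ (a b : ℝ), ((fun x : ℝ => t - a ^ x * b ^ (1 - x) -
      (t - a) ^ x * (t - b) ^ (1 - x)) '' Icc 0 1) ⊆
      ((fun x : ℝ => t - b ^ x * a ^ (1 - x) - (t - b) ^ x * (t - a) ^ (1 - x)) '' Icc 0 1) := by
    rintro a b y ⟨x, hx, rfl⟩
    refine ⟨1 - x, ⟨by linarith [hx.2], by linarith [hx.1]⟩, ?_⟩
    simp only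
    rw [show (1:ℝ) - (1 - x) = x by ring]
    ring
  exact Subset.antisymm (h a b) (h b a)

private lemma vsym (a b : ℝ) (ha : 0 < a) (hb : 0 < b) (hab : a ≠ b) :
    b - ((b - a) / (Real.log b - Real.log a)) *
        Real.log (Real.exp 1 * b * (Real.log b - Real.log a) / (b - a)) =
    a - ((a - b) / (Real.log a - Real.log b)) *
        Real.log (Real.exp 1 * a * (Real.log a - Real.log b) / (a - b)) := by
  have hD : Real.log a - Real.log b ≠ 0 := sub_ne_zero.2 (log_ne_log a b ha hb hab)
  have hab' : a - b ≠ 0 := sub_ne_zero.2 hab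
  have hLD : (a - b) / (Real.log a - Real.log b) * (Real.log a - Real.log b) = a - b :=
    div_mul_cancel₀ _ hD
  have h1 : (b - a) / (Real.log b - Real.log a) = (a - b) / (Real.log a - Real.log b) := by
    rw [show b - a = -(a - b) by ring,
      show Real.log b - Real.log a = -(Real.log a - Real.log b) by ring, neg_div_neg_eq]
  have hlog1 : Real.log (Real.exp 1 * a * (Real.log a - Real.log b) / (a - b))
      = 1 + Real.log a + Real.log (Real.log a - Real.log b) - Real.log (a - b) := by
    rw [Real.log_div (mul_ne_zero (mul_ne_zero (Real.exp_ne_zero 1) ha.ne') hD) hab',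
      Real.log_mul (mul_ne_zero (Real.exp_ne_zero 1) ha.ne') hD,
      Real.log_mul (Real.exp_ne_zero 1) ha.ne', Real.log_exp]
  have hlog2 : Real.log (Real.exp 1 * b * (Real.log b - Real.log a) / (b - a))
      = 1 + Real.log b + Real.log (Real.log a - Real.log b) - Real.log (a - b) := by
    rw [show Real.log b - Real.log a = -(Real.log a - Real.log b) by ring,
      show b - a = -(a - b) by ring,
      Real.log_div (mul_ne_zero (mul_ne_zero (Real.exp_ne_zero 1) hb.ne') (neg_ne_zero.2 hD))
        (neg_ne_zero.2 hab'),
      Real.log_mul (mul_ne_zero (Real.exp_ne_zero 1) hb.ne') (neg_ne_zero.2 hD),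
      Real.log_mul (Real.exp_ne_zero 1) hb.ne', Real.log_exp, Real.log_neg_eq_log,
      Real.log_neg_eq_log]
  rw [h1, hlog1, hlog2]
  linear_combination hLD

set_option maxHeartbeats 1000000 in
private lemma key (a b : ℝ) (hb : 0 < b) (hba : b < a) :
    Tendsto
      (fun t : ℝ => sSup ((fun x : ℝ =>
        t - a ^ x * b ^ (1 - x) - (t - a) ^ x * (t - b) ^ (1 - x)) '' Icc 0 1))
      atTop
      (nhds (a - ((a - b) / (Real.log a - Real.log b)) *
        Real.log (Real.exp 1 * a * (Real.log a - Real.log b) / (a - b)))) := by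
  have ha : 0 < a := hb.trans hba
  set la := Real.log a with hla
  set lb := Real.log b with hlb
  have hD : 0 < la - lb := sub_pos.2 (Real.log_lt_log hb hba)
  have hab : 0 < a - b := sub_pos.2 hba
  have hlab : la = Real.log a ∧ lb = Real.log b := ⟨hla, hlb⟩
  clear_value la lb
  set L : ℝ := (a - b) / (la - lb) with hLdef
  have hL : 0 < L := div_pos hab hD
  have hLD : L * (la - lb) = a - b := div_mul_cancel₀ _ hD.ne'
  clear_value L
  -- b < L < a
  have hbL : b < L := by
    have h := Real.log_lt_sub_one_of_pos (div_pos ha hb)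
      (ne_of_gt ((one_lt_div hb).2 hba))
    rw [Real.log_div ha.ne' hb.ne'] at h
    have h2 : a / b - 1 = (a - b) / b := by field_simp
    rw [h2, lt_div_iff₀ hb] at h
    rw [hLdef, lt_div_iff₀ hD]
    nlinarith [h]
  have hLa : L < a := by
    have h := Real.log_lt_sub_one_of_pos (div_pos hb ha)
      (ne_of_lt ((div_lt_one ha).2 hba))
    rw [Real.log_div hb.ne' ha.ne'] at h
    have h2 : b / a - 1 = (b - a) / a := by field_simp
    rw [h2, lt_div_iff₀ ha] at h
    rw [hLdef, div_lt_iff₀ hD]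
    nlinarith [h]
  set M : ℝ := b + L * (Real.log L - lb) - L with hMdef
  clear_value M
  have hlbL : lb < Real.log L := by rw [hlb]; exact Real.log_lt_log hb hbL
  have hlLa : Real.log L < la := by rw [hla]; exact Real.log_lt_log hL hLa
  set x₀ : ℝ := (Real.log L - lb) / (la - lb) with hx₀def
  clear_value x₀
  have hx0 : 0 ≤ x₀ := by rw [hx₀def]; exact div_nonneg (by linarith) hD.le
  have hx1 : x₀ ≤ 1 := by rw [hx₀def]; exact (div_le_one hD).2 (by linarith)
  have hexp : ∀ x : ℝ, a ^ x * b ^ (1 - x) = Real.exp (x * la + (1 - x) * lb) := by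
    intro x
    rw [hla, hlb, Real.rpow_def_of_pos ha, Real.rpow_def_of_pos hb, ← Real.exp_add]
    exact congrArg Real.exp (by ring)
  have htan : ∀ x : ℝ, L * (1 + (x * la + (1 - x) * lb) - Real.log L) ≤ a ^ x * b ^ (1 - x) := by
    intro x
    rw [hexp x]
    have h := Real.add_one_le_exp (x * la + (1 - x) * lb - Real.log L)
    have h2 : Real.exp (x * la + (1 - x) * lb - Real.log L)
        = Real.exp (x * la + (1 - x) * lb) / L := by
      rw [Real.exp_sub, Real.exp_log hL]
    rw [h2] at h
    calc L * (1 + (x * la + (1 - x) * lb) - Real.log L)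
        ≤ L * (Real.exp (x * la + (1 - x) * lb) / L) :=
          mul_le_mul_of_nonneg_left (by linarith) hL.le
      _ = Real.exp (x * la + (1 - x) * lb) := by field_simp
  have hφM : ∀ x : ℝ, x * a + (1 - x) * b - a ^ x * b ^ (1 - x) ≤ M := by
    intro x
    have h := htan x
    have he : x * a + (1 - x) * b - L * (1 + (x * la + (1 - x) * lb) - Real.log L) = M := by
      rw [hMdef]; linear_combination -(x * hLD)
    linarith
  have hxs : x₀ * la + (1 - x₀) * lb = Real.log L := by
    rw [hx₀def]; field_simp; ring
  have hPx : a ^ x₀ * b ^ (1 - x₀) = L := by rw [hexp, hxs, Real.exp_log hL]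
  have hMx : x₀ * a + (1 - x₀) * b - L = M := by
    have hxab : x₀ * (a - b) = (Real.log L - lb) * L := by
      rw [hx₀def, ← hLD]; field_simp
    rw [hMdef]; linear_combination hxab
  -- upper bound on the function, for t ≥ a + 1
  have hub : ∀ t : ℝ, a + 1 ≤ t → ∀ x ∈ Icc (0:ℝ) 1,
      t - a ^ x * b ^ (1 - x) - (t - a) ^ x * (t - b) ^ (1 - x)
        ≤ M + (a - b) ^ 2 / (t - a) := by
    intro t ht x hx
    obtain ⟨hx0', hx1'⟩ := hx
    have h1x : (0:ℝ) ≤ 1 - x := by linarith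
    have hu : 0 < t - a := by linarith
    have hv : 0 < t - b := by linarith
    have hAMinv := Real.geom_mean_le_arith_mean2_weighted hx0' h1x
      (inv_nonneg.2 hu.le) (inv_nonneg.2 hv.le) (by ring)
    rw [Real.inv_rpow hu.le, Real.inv_rpow hv.le, ← mul_inv] at hAMinv
    set ψ := (t - a) ^ x * (t - b) ^ (1 - x) with hψ
    have hψpos : 0 < ψ := mul_pos (Real.rpow_pos_of_pos hu x) (Real.rpow_pos_of_pos hv _)
    clear_value ψ
    have hBpos : 0 < x * (t - b) + (1 - x) * (t - a) := by
      nlinarith [mul_nonneg hx0' hab.le]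
    have hR : x * (t - a)⁻¹ + (1 - x) * (t - b)⁻¹
        = (x * (t - b) + (1 - x) * (t - a)) / ((t - a) * (t - b)) := by
      field_simp
    rw [hR] at hAMinv
    have huv : (t - a) * (t - b) ≤ ψ * (x * (t - b) + (1 - x) * (t - a)) := by
      rw [inv_eq_one_div, div_le_div_iff₀ hψpos (mul_pos hu hv)] at hAMinv
      nlinarith [hAMinv]
    have hta_B : t - a ≤ x * (t - b) + (1 - x) * (t - a) := by
      nlinarith [mul_nonneg hx0' hab.le]
    have h2 : (x * (t - a) + (1 - x) * (t - b)) - ψ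
        ≤ x * (1 - x) * (a - b) ^ 2 / (x * (t - b) + (1 - x) * (t - a)) := by
      rw [le_div_iff₀ hBpos]
      nlinarith [huv]
    have h3 : x * (1 - x) * (a - b) ^ 2 / (x * (t - b) + (1 - x) * (t - a))
        ≤ (a - b) ^ 2 / (t - a) := by
      apply div_le_div₀ (sq_nonneg _) ?_ hu hta_B
      nlinarith [mul_nonneg (mul_nonneg hx0' hx0') (sq_nonneg (a - b)),
        mul_nonneg (mul_nonneg h1x h1x) (sq_nonneg (a - b)), sq_nonneg (a - b)]
    have h4 := hφM x
    have h5 : t - a ^ x * b ^ (1 - x) - ψ = (x * a + (1 - x) * b - a ^ x * b ^ (1 - x))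
        + ((x * (t - a) + (1 - x) * (t - b)) - ψ) := by ring
    linarith
  -- lower bound via x₀
  have hlow : ∀ t : ℝ, a + 1 ≤ t →
      M ≤ t - a ^ x₀ * b ^ (1 - x₀) - (t - a) ^ x₀ * (t - b) ^ (1 - x₀) := by
    intro t ht
    have hu : 0 < t - a := by linarith
    have hv : 0 < t - b := by linarith
    have h1x : (0:ℝ) ≤ 1 - x₀ := by linarith
    have hAM := Real.geom_mean_le_arith_mean2_weighted hx0 h1x hu.le hv.le (by ring)
    rw [hPx]
    nlinarith [hAM, hMx]
  -- identify the limit value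
  have hlog : Real.log (Real.exp 1 * a * (la - lb) / (a - b))
      = 1 + la + Real.log (la - lb) - Real.log (a - b) := by
    rw [Real.log_div (mul_ne_zero (mul_ne_zero (Real.exp_ne_zero 1) ha.ne') hD.ne') hab.ne',
      Real.log_mul (mul_ne_zero (Real.exp_ne_zero 1) ha.ne') hD.ne',
      Real.log_mul (Real.exp_ne_zero 1) ha.ne', Real.log_exp, ← hla]
  have hMlog : Real.log L = Real.log (a - b) - Real.log (la - lb) := by
    rw [hLdef, Real.log_div hab.ne' hD.ne']
  have hgoal : a - L * Real.log (Real.exp 1 * a * (la - lb) / (a - b)) = M := by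
    rw [hlog, hMdef, hMlog]
    linear_combination -hLD
  rw [hgoal]
  have h0 : Tendsto (fun t : ℝ => (a - b) ^ 2 / (t - a)) atTop (nhds 0) := by
    apply Tendsto.div_atTop tendsto_const_nhds
    exact (tendsto_atTop_add_const_right atTop (-a) tendsto_id).congr
      (fun t => (sub_eq_add_neg t a).symm)
  have hupper : Tendsto (fun t : ℝ => M + (a - b) ^ 2 / (t - a)) atTop (nhds M) := by
    simpa using h0.const_add M
  apply tendsto_of_tendsto_of_tendsto_of_le_of_le'
    (tendsto_const_nhds : Tendsto (fun _ : ℝ => M) atTop (nhds M)) hupper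
  · filter_upwards [eventually_ge_atTop (a + 1)] with t ht
    have hbdd : BddAbove ((fun x : ℝ =>
        t - a ^ x * b ^ (1 - x) - (t - a) ^ x * (t - b) ^ (1 - x)) '' Icc 0 1) := by
      refine ⟨M + (a - b) ^ 2 / (t - a), ?_⟩
      rintro y ⟨x, hx, rfl⟩
      exact hub t ht x hx
    exact le_trans (hlow t ht) (le_csSup hbdd (mem_image_of_mem _ ⟨hx0, hx1⟩))
  · filter_upwards [eventually_ge_atTop (a + 1)] with t ht
    apply csSup_le ((nonempty_Icc.2 (by norm_num)).image _)
    rintro y ⟨x, hx, rfl⟩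
    exact hub t ht x hx

theorem max_g_tendsto_atTop (a b : ℝ) (ha : 0 < a) (hb : 0 < b) (hab : a ≠ b) :
    Tendsto
      (fun t : ℝ => sSup ((fun x : ℝ =>
        t - a ^ x * b ^ (1 - x) - (t - a) ^ x * (t - b) ^ (1 - x)) '' Icc 0 1))
      atTop
      (nhds (a - ((a - b) / (Real.log a - Real.log b)) *
        Real.log (Real.exp 1 * a * (Real.log a - Real.log b) / (a - b)))) := by
  rcases hab.lt_or_gt with h | h
  · have H := key b a ha h
    have hfun : (fun t : ℝ => sSup ((fun x : ℝ =>
        t - b ^ x * a ^ (1 - x) - (t - b) ^ x * (t - a) ^ (1 - x)) '' Icc 0 1))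
        = (fun t : ℝ => sSup ((fun x : ℝ =>
        t - a ^ x * b ^ (1 - x) - (t - a) ^ x * (t - b) ^ (1 - x)) '' Icc 0 1)) :=
      funext fun t => congrArg sSup (img_symm b a t)
    rw [hfun, vsym a b ha hb hab] at H
    exact H
  · exact key a b hb h
end

section
/- Let 0 < q < p < 1, α ∈ (0,1), y = log((1−q)/(1−p))/log(p/q), and let X₁,…,X_m be i.i.d. with P(X_i = 1) = αp, P(X_i = −y) = α(1−p), P(X_i = 0) = 1−α. Then for every ε > 0 and n ≥ 1, log P(∑_{i=1}^m X_i ≤ ε·log n) ≤ −α·m·Δ₊(p,q) + ε·log(p/q)·log n, where Δ₊(p,q) = max_{x∈[0,1]} (1 − p^x q^{1−x} − (1−p)^x (1−q)^{1−x}). -/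
open Set MeasureTheory ProbabilityTheory

lemma mgf_three_point {Ω : Type*} [MeasurableSpace Ω] (μ : Measure Ω)
    [IsProbabilityMeasure μ] (X : Ω → ℝ) (hX : Measurable X)
    (a b c u v : ℝ) (huv : u ≠ v) (hu0 : u ≠ 0) (hv0 : v ≠ 0)
    (ha : 0 ≤ a) (hb : 0 ≤ b) (hc : 0 ≤ c) (habc : a + b + c = 1)
    (h1 : μ {ω | X ω = u} = ENNReal.ofReal a)
    (h2 : μ {ω | X ω = v} = ENNReal.ofReal b)
    (h3 : μ {ω | X ω = 0} = ENNReal.ofReal c) (t : ℝ) :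
    Integrable (fun ω => Real.exp (t * X ω)) μ ∧
      mgf X μ t = a * Real.exp (t * u) + b * Real.exp (t * v) + c := by
  set A : Set Ω := X ⁻¹' {u} with hA
  set B : Set Ω := X ⁻¹' {v} with hB
  set C : Set Ω := X ⁻¹' {0} with hC
  have hAm : MeasurableSet A := hX (measurableSet_singleton u)
  have hBm : MeasurableSet B := hX (measurableSet_singleton v)
  have hCm : MeasurableSet C := hX (measurableSet_singleton 0)
  have hA' : μ A = ENNReal.ofReal a := h1
  have hB' : μ B = ENNReal.ofReal b := h2
  have hC' : μ C = ENNReal.ofReal c := h3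
  have hdAB : Disjoint A B := Set.disjoint_left.2 fun ω hωA hωB => huv (hωA.symm.trans hωB)
  have hdAC : Disjoint A C := Set.disjoint_left.2 fun ω hωA hωC => hu0 (hωA.symm.trans hωC)
  have hdBC : Disjoint B C := Set.disjoint_left.2 fun ω hωB hωC => hv0 (hωB.symm.trans hωC)
  have hunion : μ (A ∪ B ∪ C) = 1 := by
    rw [measure_union (hdAC.union_left hdBC) hCm, measure_union hdAB hBm, hA', hB', hC',
      ← ENNReal.ofReal_add ha hb, ← ENNReal.ofReal_add (by linarith) hc, habc,
      ENNReal.ofReal_one]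
  have hcompl : μ (A ∪ B ∪ C)ᶜ = 0 := by
    rw [measure_compl ((hAm.union hBm).union hCm) (measure_ne_top μ _), hunion, measure_univ,
      tsub_self]
  have hae : ∀ᵐ ω ∂μ, ω ∈ A ∪ B ∪ C := by
    rw [ae_iff]; convert hcompl using 2; rfl
  set g : Ω → ℝ := fun ω =>
    A.indicator (fun _ => Real.exp (t * u)) ω + B.indicator (fun _ => Real.exp (t * v)) ω +
      C.indicator (fun _ => (1 : ℝ)) ω with hg
  have heq : (fun ω => Real.exp (t * X ω)) =ᵐ[μ] g := by
    filter_upwards [hae] with ω hω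
    rcases hω with (hω | hω) | hω
    · have hXω : X ω = u := hω
      have h1' : ω ∉ B := fun h => huv (hXω.symm.trans h)
      have h2' : ω ∉ C := fun h => hu0 (hXω.symm.trans h)
      simp [hg, Set.indicator_of_mem hω, Set.indicator_of_notMem h1',
        Set.indicator_of_notMem h2', hXω]
    · have hXω : X ω = v := hω
      have h1' : ω ∉ A := fun h => huv ((show X ω = u from h).symm.trans hXω)
      have h2' : ω ∉ C := fun h => hv0 (hXω.symm.trans h)
      simp [hg, Set.indicator_of_mem hω, Set.indicator_of_notMem h1',
        Set.indicator_of_notMem h2', hXω]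
    · have hXω : X ω = 0 := hω
      have h1' : ω ∉ A := fun h => hu0 ((show X ω = u from h).symm.trans hXω)
      have h2' : ω ∉ B := fun h => hv0 ((show X ω = v from h).symm.trans hXω)
      simp [hg, Set.indicator_of_mem hω, Set.indicator_of_notMem h1',
        Set.indicator_of_notMem h2', hXω]
  have hgint : Integrable g μ :=
    (((integrable_const _).indicator hAm).add ((integrable_const _).indicator hBm)).add
      ((integrable_const _).indicator hCm)
  have hint : Integrable (fun ω => Real.exp (t * X ω)) μ := hgint.congr heq.symm
  refine ⟨hint, ?_⟩
  have : mgf X μ t = ∫ ω, g ω ∂μ := integral_congr_ae heq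
  rw [this]
  have hIg : ∫ ω, g ω ∂μ = (μ A).toReal * Real.exp (t * u) + (μ B).toReal * Real.exp (t * v) +
      (μ C).toReal * 1 := by
    have iA : Integrable (fun ω => A.indicator (fun _ => Real.exp (t * u)) ω) μ :=
      (integrable_const _).indicator hAm
    have iB : Integrable (fun ω => B.indicator (fun _ => Real.exp (t * v)) ω) μ :=
      (integrable_const _).indicator hBm
    have iC : Integrable (fun ω => C.indicator (fun _ => (1 : ℝ)) ω) μ :=
      (integrable_const _).indicator hCm
    have iAB : Integrable (fun ω => A.indicator (fun _ => Real.exp (t * u)) ω +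
        B.indicator (fun _ => Real.exp (t * v)) ω) μ := iA.add iB
    simp only [hg]
    rw [integral_add iAB iC, integral_add iA iB,
      integral_indicator_const _ hAm, integral_indicator_const _ hBm,
      integral_indicator_const _ hCm]
    simp [smul_eq_mul, Measure.real]
  rw [hIg, hA', hB', hC', ENNReal.toReal_ofReal ha, ENNReal.toReal_ofReal hb,
    ENNReal.toReal_ofReal hc]
  ring

theorem concentration_X {Ω : Type*} [MeasurableSpace Ω] (μ : Measure Ω)
    [IsProbabilityMeasure μ] (m : ℕ) (p q α : ℝ)
    (hq : 0 < q) (hqp : q < p) (hp : p < 1) (hα : 0 < α) (hα1 : α < 1)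
    (y : ℝ) (hy : y = Real.log ((1 - q) / (1 - p)) / Real.log (p / q))
    (X : Fin m → Ω → ℝ) (hmeas : ∀ i, Measurable (X i))
    (hindep : iIndepFun X μ)
    (hdist1 : ∀ i, μ {ω | X i ω = 1} = ENNReal.ofReal (α * p))
    (hdist2 : ∀ i, μ {ω | X i ω = -y} = ENNReal.ofReal (α * (1 - p)))
    (hdist3 : ∀ i, μ {ω | X i ω = 0} = ENNReal.ofReal (1 - α))
    (ε : ℝ) (hε : 0 < ε) (n : ℕ) (hn : 1 ≤ n) :
    Real.log ((μ {ω | ∑ i, X i ω ≤ ε * Real.log n}).toReal) ≤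
      -(α * m * sSup ((fun x : ℝ =>
          1 - p ^ x * q ^ (1 - x) - (1 - p) ^ x * (1 - q) ^ (1 - x)) '' Icc 0 1))
        + ε * Real.log (p / q) * Real.log n := by
  have hp0 : 0 < p := hq.trans hqp
  have h1p : 0 < 1 - p := by linarith
  have h1q : 0 < 1 - q := by linarith
  set L := Real.log (p / q) with hLdef
  have hL : 0 < L := Real.log_pos ((one_lt_div hq).2 hqp)
  have hLpq : L = Real.log p - Real.log q := Real.log_div hp0.ne' hq.ne'
  have hM : 0 < Real.log ((1 - q) / (1 - p)) := Real.log_pos ((one_lt_div h1p).2 (by linarith))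
  have hMpq : Real.log ((1 - q) / (1 - p)) = Real.log (1 - q) - Real.log (1 - p) :=
    Real.log_div h1q.ne' h1p.ne'
  have hy0 : 0 < y := by rw [hy]; exact div_pos hM hL
  have hLy : L * y = Real.log ((1 - q) / (1 - p)) := by
    rw [hy]; field_simp
  have hlogn : 0 ≤ Real.log n := Real.log_nonneg (by exact_mod_cast hn)
  set P := (μ {ω | ∑ i, X i ω ≤ ε * Real.log n}).toReal with hPdef
  set f : ℝ → ℝ := fun x => 1 - p ^ x * q ^ (1 - x) - (1 - p) ^ x * (1 - q) ^ (1 - x) with hf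
  -- positivity of P
  have hPpos : 0 < P := by
    have hsub : (⋂ i ∈ Finset.univ, X i ⁻¹' ({0} : Set ℝ)) ⊆
        {ω | ∑ i, X i ω ≤ ε * Real.log n} := by
      intro ω hω
      simp only [Finset.mem_univ, Set.iInter_true, Set.mem_iInter, Set.mem_preimage,
        Set.mem_singleton_iff] at hω
      have : ∑ i, X i ω = 0 := Finset.sum_eq_zero fun i _ => hω i
      simp only [Set.mem_setOf_eq, this]
      exact mul_nonneg hε.le hlogn
    have key := hindep.measure_inter_preimage_eq_mul (sets := fun _ => ({0} : Set ℝ))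
      Finset.univ (fun i _ => measurableSet_singleton 0)
    have hpre : ∀ i, μ (X i ⁻¹' ({0} : Set ℝ)) = ENNReal.ofReal (1 - α) := fun i => hdist3 i
    have hval : μ (⋂ i ∈ Finset.univ, X i ⁻¹' ({0} : Set ℝ)) = ENNReal.ofReal (1 - α) ^ m := by
      rw [key]
      simp [hpre]
    have hne : μ {ω | ∑ i, X i ω ≤ ε * Real.log n} ≠ 0 := by
      intro h0
      have hmono := measure_mono (μ := μ) hsub
      rw [hval, h0] at hmono
      exact pow_ne_zero m (ENNReal.ofReal_pos.2 (by linarith : (0:ℝ) < 1 - α)).ne'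
        (le_antisymm hmono (zero_le))
    exact ENNReal.toReal_pos hne (measure_ne_top μ _)
  have hPle1 : P ≤ 1 := by
    have h1 : μ {ω | ∑ i, X i ω ≤ ε * Real.log n} ≤ 1 :=
      (measure_mono (Set.subset_univ _)).trans measure_univ.le
    calc P ≤ (1 : ENNReal).toReal := ENNReal.toReal_mono (by simp) h1
      _ = 1 := by simp
  have hlogP : Real.log P ≤ 0 := Real.log_nonpos hPpos.le hPle1
  -- per-x Chernoff bound
  have hbound : ∀ x ∈ Icc (0:ℝ) 1, Real.log P ≤ ε * L * Real.log n - α * m * f x := by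
    intro x hx
    obtain ⟨hx0, hx1⟩ := hx
    set t := -((1 - x) * L) with htdef
    have ht : t ≤ 0 := by
      rw [htdef]
      have : 0 ≤ (1 - x) * L := mul_nonneg (by linarith) hL.le
      linarith
    have hmgf : ∀ i : Fin m, Integrable (fun ω => Real.exp (t * X i ω)) μ ∧
        mgf (X i) μ t = α * p * Real.exp (t * 1) + α * (1 - p) * Real.exp (t * (-y)) +
          (1 - α) := by
      intro i
      exact mgf_three_point μ (X i) (hmeas i) (α * p) (α * (1 - p)) (1 - α) 1 (-y)
        (by intro h; linarith) one_ne_zero (by intro h; linarith)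
        (mul_nonneg hα.le hp0.le) (mul_nonneg hα.le h1p.le) (by linarith) (by ring)
        (hdist1 i) (hdist2 i) (hdist3 i) t
    have e1 : p * Real.exp (t * 1) = p ^ x * q ^ (1 - x) := by
      rw [Real.rpow_def_of_pos hp0, Real.rpow_def_of_pos hq, ← Real.exp_add]
      nth_rewrite 1 [← Real.exp_log hp0]
      rw [← Real.exp_add]
      congr 1
      rw [htdef, hLpq]; ring
    have e2 : (1 - p) * Real.exp (t * (-y)) = (1 - p) ^ x * (1 - q) ^ (1 - x) := by
      rw [Real.rpow_def_of_pos h1p, Real.rpow_def_of_pos h1q, ← Real.exp_add]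
      nth_rewrite 1 [← Real.exp_log h1p]
      have harg : t * (-y) = (1 - x) * (L * y) := by rw [htdef]; ring
      rw [← Real.exp_add, harg, hLy, hMpq]
      congr 1
      ring
    have hmgfval : ∀ i : Fin m, mgf (X i) μ t = 1 - α * f x := by
      intro i
      rw [(hmgf i).2, mul_assoc α p, mul_assoc α (1 - p), e1, e2, hf]
      ring
    have hP1 : 0 ≤ p ^ x * q ^ (1 - x) :=
      mul_nonneg (Real.rpow_nonneg hp0.le x) (Real.rpow_nonneg hq.le (1 - x))
    have hP2 : 0 ≤ (1 - p) ^ x * (1 - q) ^ (1 - x) :=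
      mul_nonneg (Real.rpow_nonneg h1p.le x) (Real.rpow_nonneg h1q.le (1 - x))
    have h0mgf : 0 ≤ 1 - α * f x := by
      simp only [hf]
      nlinarith [mul_nonneg hα.le hP1, mul_nonneg hα.le hP2]
    -- Chernoff
    have hint_sum : Integrable (fun ω => Real.exp (t * (∑ i, X i) ω)) μ :=
      hindep.integrable_exp_mul_sum hmeas (fun i _ => (hmgf i).1)
    have hch := measure_le_le_exp_mul_mgf (X := ∑ i, X i) (μ := μ) (t := t)
      (ε * Real.log n) ht hint_sum
    have hsetEq : {ω | (∑ i, X i) ω ≤ ε * Real.log n} = {ω | ∑ i, X i ω ≤ ε * Real.log n} := by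
      ext ω
      simp [Finset.sum_apply]
    rw [hsetEq] at hch
    have hmgfsum : mgf (∑ i, X i) μ t = (1 - α * f x) ^ m := by
      rw [hindep.mgf_sum hmeas Finset.univ]
      rw [Finset.prod_congr rfl fun i _ => hmgfval i, Finset.prod_const, Finset.card_univ,
        Fintype.card_fin]
    have hexp1 : (1 - α * f x) ^ m ≤ Real.exp (-(α * f x)) ^ m := by
      apply pow_le_pow_left₀ h0mgf
      have := Real.add_one_le_exp (-(α * f x))
      linarith
    have hexp2 : Real.exp (-(α * f x)) ^ m = Real.exp ((m : ℝ) * -(α * f x)) :=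
      (Real.exp_nat_mul _ m).symm
    have hfinal : P ≤ Real.exp (-t * (ε * Real.log n) + (m : ℝ) * -(α * f x)) := by
      rw [Real.exp_add]
      calc P ≤ Real.exp (-t * (ε * Real.log n)) * mgf (∑ i, X i) μ t := hch
        _ ≤ Real.exp (-t * (ε * Real.log n)) * Real.exp ((m : ℝ) * -(α * f x)) := by
            rw [hmgfsum, ← hexp2]
            exact mul_le_mul_of_nonneg_left hexp1 (Real.exp_pos _).le
    have hlogle : Real.log P ≤ -t * (ε * Real.log n) + (m : ℝ) * -(α * f x) :=
      (Real.log_le_iff_le_exp hPpos).2 hfinal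
    have htle : -t * (ε * Real.log n) ≤ ε * L * Real.log n := by
      have h1 : -t = (1 - x) * L := by rw [htdef]; ring
      rw [h1]
      have h2 : (1 - x) * L ≤ L := by nlinarith [mul_nonneg hx0 hL.le]
      have h3 : 0 ≤ ε * Real.log n := mul_nonneg hε.le hlogn
      calc (1 - x) * L * (ε * Real.log n) ≤ L * (ε * Real.log n) :=
            mul_le_mul_of_nonneg_right h2 h3
        _ = ε * L * Real.log n := by ring
    have hr : (m : ℝ) * -(α * f x) = -(α * m * f x) := by ring
    linarith
  -- assemble
  set S := sSup ((fun x : ℝ =>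
      1 - p ^ x * q ^ (1 - x) - (1 - p) ^ x * (1 - q) ^ (1 - x)) '' Icc 0 1) with hS
  have hC : 0 ≤ ε * L * Real.log n := mul_nonneg (mul_nonneg hε.le hL.le) hlogn
  rcases Nat.eq_zero_or_pos m with hm | hm
  · subst hm
    simp only [Nat.cast_zero, mul_zero, zero_mul, neg_zero, zero_add]
    linarith
  · have hαm : 0 < α * (m : ℝ) := mul_pos hα (by exact_mod_cast hm)
    have hSle : S ≤ (ε * L * Real.log n - Real.log P) / (α * m) := by
      rw [hS]
      apply Real.sSup_le
      · rintro z ⟨x, hx, rfl⟩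
        rw [le_div_iff₀ hαm]
        have hb := hbound x hx
        have hr : α * (m : ℝ) * f x = f x * (α * m) := by ring
        linarith
      · exact div_nonneg (by linarith) hαm.le
    rw [le_div_iff₀ hαm] at hSle
    have hr2 : α * (m : ℝ) * S = S * (α * m) := by ring
    linarith
end

section
/- Let 0 < q < p < 1, α ∈ (0,1), y = log((1−q)/(1−p))/log(p/q), and let Y₁,…,Y_m be i.i.d. with P(Y_i = 1) = αq, P(Y_i = −y) = α(1−q), P(Y_i = 0) = 1−α. Then for every ε > 0 and n ≥ 1, log P(∑_{i=1}^m Y_i ≥ −ε·log n) ≤ −α·m·Δ₊(p,q) + ε·log(p/q)·log n. -/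
open Set MeasureTheory ProbabilityTheory

lemma three_point_mgf {Ω : Type*} [MeasurableSpace Ω] (μ : Measure Ω)
    [IsProbabilityMeasure μ] (X : Ω → ℝ) (hX : Measurable X)
    (a b : ℝ) (pa pb pc : ℝ) (hpa : 0 ≤ pa) (hpb : 0 ≤ pb) (hpc : 0 ≤ pc)
    (hA : μ {ω | X ω = a} = ENNReal.ofReal pa)
    (hB : μ {ω | X ω = b} = ENNReal.ofReal pb)
    (hC : μ {ω | X ω = 0} = ENNReal.ofReal pc)
    (hab : a ≠ b) (ha0 : a ≠ 0) (hb0 : b ≠ 0) (hsum : pa + pb + pc = 1) (t : ℝ) :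
    mgf X μ t = pa * Real.exp (t*a) + pb * Real.exp (t*b) + pc
      ∧ Integrable (fun ω => Real.exp (t * X ω)) μ := by
  have hmA : MeasurableSet {ω | X ω = a} := hX (measurableSet_singleton a)
  have hmB : MeasurableSet {ω | X ω = b} := hX (measurableSet_singleton b)
  have hmC : MeasurableSet {ω | X ω = 0} := hX (measurableSet_singleton (0:ℝ))
  have hae : (fun ω => Real.exp (t * X ω)) =ᵐ[μ]
      (fun ω => ({ω | X ω = a}.indicator (fun _ => Real.exp (t*a)) ω
        + {ω | X ω = b}.indicator (fun _ => Real.exp (t*b)) ω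
        + {ω | X ω = 0}.indicator (fun _ => (1:ℝ)) ω)) := by
    have hunion : μ ({ω | X ω = a} ∪ {ω | X ω = b} ∪ {ω | X ω = 0}) = 1 := by
      have hd1 : Disjoint {ω | X ω = a} {ω | X ω = b} := by
        rw [Set.disjoint_left]; intro ω h1 h2; exact hab (h1.symm.trans h2)
      have hd2 : Disjoint ({ω | X ω = a} ∪ {ω | X ω = b}) {ω | X ω = 0} := by
        rw [Set.disjoint_left]; rintro ω (h1 | h1) h2
        · exact ha0 (h1.symm.trans h2)
        · exact hb0 (h1.symm.trans h2)
      rw [measure_union hd2 hmC, measure_union hd1 hmB, hA, hB, hC,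
        ← ENNReal.ofReal_add hpa hpb, ← ENNReal.ofReal_add (by linarith) hpc, hsum,
        ENNReal.ofReal_one]
    have hcompl : μ ({ω | X ω = a} ∪ {ω | X ω = b} ∪ {ω | X ω = 0})ᶜ = 0 := by
      rw [measure_compl ((hmA.union hmB).union hmC) (measure_ne_top μ _), hunion,
        measure_univ, tsub_self]
    refine (ae_iff.2 (measure_mono_null ?_ hcompl))
    intro ω hω
    simp only [Set.mem_setOf_eq] at hω
    simp only [Set.mem_compl_iff, Set.mem_union, Set.mem_setOf_eq]
    rintro ((h | h) | h) <;> apply hω <;>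
      simp [Set.indicator_apply, Set.mem_setOf_eq, h, hab, ha0, hb0, Ne.symm]
  have hintA : Integrable ({ω | X ω = a}.indicator (fun _ => Real.exp (t*a))) μ :=
    (integrable_const _).indicator hmA
  have hintB : Integrable ({ω | X ω = b}.indicator (fun _ => Real.exp (t*b))) μ :=
    (integrable_const _).indicator hmB
  have hintC : Integrable ({ω | X ω = 0}.indicator (fun _ => (1:ℝ))) μ :=
    (integrable_const _).indicator hmC
  have hint : Integrable (fun ω => Real.exp (t * X ω)) μ :=
    ((hintA.add hintB).add hintC).congr hae.symm
  refine ⟨?_, hint⟩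
  have h12 : Integrable (fun ω => {ω | X ω = a}.indicator (fun _ => Real.exp (t*a)) ω
      + {ω | X ω = b}.indicator (fun _ => Real.exp (t*b)) ω) μ := hintA.add hintB
  rw [mgf, integral_congr_ae hae]
  rw [integral_add h12 hintC, integral_add hintA hintB,
    integral_indicator_const _ hmA, integral_indicator_const _ hmB,
    integral_indicator_const _ hmC, measureReal_def, measureReal_def, measureReal_def, hA, hB, hC,
    ENNReal.toReal_ofReal hpa, ENNReal.toReal_ofReal hpb, ENNReal.toReal_ofReal hpc]
  simp [mul_comm]

theorem concentration_Y {Ω : Type*} [MeasurableSpace Ω] (μ : Measure Ω)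
    [IsProbabilityMeasure μ] (m : ℕ) (p q α : ℝ)
    (hq : 0 < q) (hqp : q < p) (hp : p < 1) (hα : 0 < α) (hα1 : α < 1)
    (y : ℝ) (hy : y = Real.log ((1 - q) / (1 - p)) / Real.log (p / q))
    (Y : Fin m → Ω → ℝ) (hmeas : ∀ i, Measurable (Y i))
    (hindep : iIndepFun Y μ)
    (hdist1 : ∀ i, μ {ω | Y i ω = 1} = ENNReal.ofReal (α * q))
    (hdist2 : ∀ i, μ {ω | Y i ω = -y} = ENNReal.ofReal (α * (1 - q)))
    (hdist3 : ∀ i, μ {ω | Y i ω = 0} = ENNReal.ofReal (1 - α))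
    (ε : ℝ) (hε : 0 < ε) (n : ℕ) (hn : 1 ≤ n) :
    Real.log ((μ {ω | -(ε * Real.log n) ≤ ∑ i, Y i ω}).toReal) ≤
      -(α * m * sSup ((fun x : ℝ =>
          1 - p ^ x * q ^ (1 - x) - (1 - p) ^ x * (1 - q) ^ (1 - x)) '' Icc 0 1))
        + ε * Real.log (p / q) * Real.log n := by
  set f : ℝ → ℝ := fun x : ℝ =>
    1 - p ^ x * q ^ (1 - x) - (1 - p) ^ x * (1 - q) ^ (1 - x) with hf
  have hp0 : 0 < p := hq.trans hqp
  have hp1 : 0 < 1 - p := by linarith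
  have hq1 : 0 < 1 - q := by linarith
  have hpq1 : 1 < p / q := (one_lt_div hq).2 hqp
  have ht : 0 < Real.log (p / q) := Real.log_pos hpq1
  set t := Real.log (p / q) with htdef
  have hlogn : 0 ≤ Real.log n := Real.log_natCast_nonneg n
  -- y > 0
  have hyt : t * y = Real.log ((1 - q) / (1 - p)) := by
    rw [hy]; field_simp
  have hy0 : 0 < y := by
    have h1 : 0 < Real.log ((1 - q) / (1 - p)) :=
      Real.log_pos ((one_lt_div hp1).2 (by linarith))
    rw [hy]; positivity
  -- maximizer of f
  have hcontc : ∀ c : ℝ, 0 < c → Continuous (fun x : ℝ => c ^ x) := fun c hc =>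
    continuous_iff_continuousAt.2 fun x => Real.continuousAt_const_rpow hc.ne'
  have hfc : Continuous f := by
    apply Continuous.sub
    apply Continuous.sub continuous_const
    · exact (hcontc p hp0).mul ((hcontc q hq).comp (continuous_const.sub continuous_id))
    · exact (hcontc (1-p) hp1).mul
        ((hcontc (1-q) hq1).comp (continuous_const.sub continuous_id))
  obtain ⟨x, hx01, hxmax⟩ := isCompact_Icc.exists_sSup_image_eq
    (nonempty_Icc.2 zero_le_one) hfc.continuousOn
  set Δ := sSup (f '' Icc 0 1) with hΔdef
  have hΔ : Δ = f x := hxmax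
  have hΔ1 : 1 - α * Δ > 0 := by
    have hA : 0 < p ^ x * q ^ (1 - x) :=
      mul_pos (Real.rpow_pos_of_pos hp0 _) (Real.rpow_pos_of_pos hq _)
    have hB : 0 < (1-p) ^ x * (1-q) ^ (1 - x) :=
      mul_pos (Real.rpow_pos_of_pos hp1 _) (Real.rpow_pos_of_pos hq1 _)
    have : Δ < 1 := by rw [hΔ, hf]; dsimp only; nlinarith
    nlinarith
  obtain ⟨hx0, hx1⟩ := hx01
  set lam := x * t with hlam
  have hlam0 : 0 ≤ lam := mul_nonneg hx0 ht.le
  have hlamt : lam ≤ t := by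
    calc lam = x * t := rfl
    _ ≤ 1 * t := by gcongr
    _ = t := one_mul t
  -- mgf of each Y i at lam
  have hmgf : ∀ i, mgf (Y i) μ lam = 1 - α * Δ
      ∧ Integrable (fun ω => Real.exp (lam * Y i ω)) μ := by
    intro i
    have h3 := three_point_mgf μ (Y i) (hmeas i) 1 (-y) (α*q) (α*(1-q)) (1-α)
      (by positivity) (by positivity) (by linarith)
      (hdist1 i) (hdist2 i) (hdist3 i)
      (by nlinarith) one_ne_zero (neg_ne_zero.2 hy0.ne') (by ring) lam
    refine ⟨?_, h3.2⟩
    rw [h3.1]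
    have he1 : Real.exp (lam * 1) = (p/q) ^ x := by
      rw [Real.rpow_def_of_pos (by positivity), mul_one, hlam, mul_comm]
    have he2 : Real.exp (lam * (-y)) = ((1-p)/(1-q)) ^ x := by
      rw [Real.rpow_def_of_pos (by positivity)]
      congr 1
      have : Real.log ((1-p)/(1-q)) = - Real.log ((1-q)/(1-p)) := by
        rw [← Real.log_inv]; congr 1; field_simp
      rw [this, ← hyt, hlam]; ring
    rw [he1, he2]
    have hq_id : q * (p/q) ^ x = p ^ x * q ^ (1-x) := by
      rw [Real.div_rpow hp0.le hq.le, Real.rpow_sub hq, Real.rpow_one]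
      field_simp
    have hq_id2 : (1-q) * ((1-p)/(1-q)) ^ x = (1-p) ^ x * (1-q) ^ (1-x) := by
      rw [Real.div_rpow hp1.le hq1.le, Real.rpow_sub hq1, Real.rpow_one]
      field_simp
    rw [hΔ, hf]
    dsimp only
    linear_combination α * hq_id + α * hq_id2
  -- Chernoff
  have hint : ∀ i ∈ Finset.univ, Integrable (fun ω => Real.exp (lam * Y i ω)) μ :=
    fun i _ => (hmgf i).2
  have hintS : Integrable (fun ω => Real.exp (lam * (∑ i, Y i) ω)) μ :=
    hindep.integrable_exp_mul_sum hmeas hint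
  have hmgfS : mgf (∑ i, Y i) μ lam = (1 - α * Δ) ^ m := by
    rw [hindep.mgf_sum hmeas]
    rw [Finset.prod_congr rfl (fun i _ => (hmgf i).1), Finset.prod_const,
      Finset.card_univ, Fintype.card_fin]
  have hcher := measure_ge_le_exp_mul_mgf (μ := μ) (X := (∑ i, Y i))
    (-(ε * Real.log n)) hlam0 hintS
  rw [hmgfS] at hcher
  have hseteq : {ω | -(ε * Real.log n) ≤ (∑ i, Y i) ω}
      = {ω | -(ε * Real.log n) ≤ ∑ i, Y i ω} := by
    ext ω; simp [Finset.sum_apply]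
  rw [hseteq] at hcher
  -- positivity of P
  have hPpos : 0 < (μ {ω | -(ε * Real.log n) ≤ ∑ i, Y i ω}).toReal := by
    have hsub : (⋂ i, {ω | Y i ω = 1}) ⊆ {ω | -(ε * Real.log n) ≤ ∑ i, Y i ω} := by
      intro ω hω
      simp only [Set.mem_iInter, Set.mem_setOf_eq] at hω ⊢
      have : ∑ i, Y i ω = (m : ℝ) := by
        rw [Finset.sum_congr rfl (fun i _ => hω i)]; simp
      rw [this]
      have : 0 ≤ ε * Real.log n := by positivity
      have : (0:ℝ) ≤ m := Nat.cast_nonneg m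
      linarith
    have hE : μ (⋂ i, {ω | Y i ω = 1}) = ENNReal.ofReal (α * q) ^ m := by
      rw [hindep.meas_iInter (s := fun i => {ω | Y i ω = 1})
        (fun i => ⟨{1}, measurableSet_singleton 1, rfl⟩)]
      rw [Finset.prod_congr rfl (fun i _ => hdist1 i), Finset.prod_const,
        Finset.card_univ, Fintype.card_fin]
    have hEpos : 0 < μ (⋂ i, {ω | Y i ω = 1}) := by
      rw [hE]
      exact ENNReal.pow_pos (ENNReal.ofReal_pos.2 (by positivity)) m
    exact ENNReal.toReal_pos (ne_of_gt (lt_of_lt_of_le hEpos (measure_mono hsub)))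
      (measure_ne_top μ _)
  -- final chain
  have hbound_pos : 0 < Real.exp (-lam * -(ε * Real.log n)) * (1 - α * Δ) ^ m := by
    positivity
  calc Real.log ((μ {ω | -(ε * Real.log n) ≤ ∑ i, Y i ω}).toReal)
      ≤ Real.log (Real.exp (-lam * -(ε * Real.log n)) * (1 - α * Δ) ^ m) :=
        Real.log_le_log hPpos hcher
    _ = lam * (ε * Real.log n) + m * Real.log (1 - α * Δ) := by
        rw [Real.log_mul (Real.exp_ne_zero _) (by positivity), Real.log_exp,
          Real.log_pow]
        ring
    _ ≤ t * (ε * Real.log n) + m * (-(α * Δ)) := by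
        have h1 : lam * (ε * Real.log n) ≤ t * (ε * Real.log n) := by
          apply mul_le_mul_of_nonneg_right hlamt (by positivity)
        have h2 : Real.log (1 - α * Δ) ≤ -(α * Δ) := by
          have := Real.log_le_sub_one_of_pos hΔ1
          linarith
        have h3 : (m:ℝ) * Real.log (1 - α * Δ) ≤ (m:ℝ) * (-(α * Δ)) :=
          mul_le_mul_of_nonneg_left h2 (Nat.cast_nonneg m)
        linarith
    _ = -(α * m * Δ) + ε * t * Real.log n := by ring
end

section
/- Let (p_n), (q_n), (t_n) be sequences of reals with 0 < p_n, q_n < 1, p_n → 0, q_n → 0, t_n·p_n → a and t_n·q_n → b for constants a, b with a = b > 0. Then t_n · max_{x∈[0,1]} (x·p_n + (1−x)·q_n − p_n^x q_n^{1−x}) → 0 as n → ∞. -/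
open Set Filter

lemma f_bounds (p q : ℝ) (hp : p ∈ Ioo (0:ℝ) 1) (hq : q ∈ Ioo (0:ℝ) 1) :
    ∀ x ∈ Icc (0:ℝ) 1, x * p + (1 - x) * q - p ^ x * q ^ (1 - x) ≤ |p - q| := by
  rintro x ⟨hx0, hx1⟩
  have hm : (0:ℝ) < min p q := lt_min hp.1 hq.1
  have h1 : (min p q) ^ x ≤ p ^ x :=
    Real.rpow_le_rpow hm.le (min_le_left _ _) hx0
  have h2 : (min p q) ^ (1 - x) ≤ q ^ (1 - x) :=
    Real.rpow_le_rpow hm.le (min_le_right _ _) (by linarith)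
  have h3 : (min p q) ^ x * (min p q) ^ (1 - x) ≤ p ^ x * q ^ (1 - x) :=
    mul_le_mul h1 h2 (Real.rpow_nonneg hm.le _) (Real.rpow_nonneg hp.1.le _)
  have h4 : (min p q) ^ x * (min p q) ^ (1 - x) = min p q := by
    rw [← Real.rpow_add hm]; simp
  have h5 : x * p + (1 - x) * q ≤ max p q := by
    have := le_max_left p q
    have := le_max_right p q
    nlinarith
  have h6 : max p q - min p q = |p - q| := (max_sub_min_eq_abs p q).trans (abs_sub_comm q p)
  linarith [h3, h4 ▸ h3]

lemma sSup_bounds (p q : ℝ) (hp : p ∈ Ioo (0:ℝ) 1) (hq : q ∈ Ioo (0:ℝ) 1) :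
    0 ≤ sSup ((fun x : ℝ => x * p + (1 - x) * q - p ^ x * q ^ (1 - x)) '' Icc 0 1) ∧
    sSup ((fun x : ℝ => x * p + (1 - x) * q - p ^ x * q ^ (1 - x)) '' Icc 0 1) ≤ |p - q| := by
  have hmem : (0:ℝ) ∈ (fun x : ℝ => x * p + (1 - x) * q - p ^ x * q ^ (1 - x)) '' Icc 0 1 := by
    refine ⟨0, by simp, ?_⟩
    simp [Real.rpow_zero, Real.rpow_one]
  have hbdd : BddAbove ((fun x : ℝ => x * p + (1 - x) * q - p ^ x * q ^ (1 - x)) '' Icc 0 1) := by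
    refine ⟨|p - q|, ?_⟩
    rintro y ⟨x, hx, rfl⟩
    exact f_bounds p q hp hq x hx
  constructor
  · exact le_csSup hbdd hmem
  · exact csSup_le ⟨0, hmem⟩ (by rintro y ⟨x, hx, rfl⟩; exact f_bounds p q hp hq x hx)

theorem degenerate_case (p q t : ℕ → ℝ) (a b : ℝ)
    (hp : ∀ n, p n ∈ Ioo (0:ℝ) 1) (hq : ∀ n, q n ∈ Ioo (0:ℝ) 1)
    (hp0 : Tendsto p atTop (nhds 0)) (hq0 : Tendsto q atTop (nhds 0))
    (htp : Tendsto (fun n => t n * p n) atTop (nhds a))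
    (htq : Tendsto (fun n => t n * q n) atTop (nhds b))
    (hab : a = b) (ha : 0 < a) :
    Tendsto (fun n => t n * sSup ((fun x : ℝ =>
        x * p n + (1 - x) * q n - (p n) ^ x * (q n) ^ (1 - x)) '' Icc 0 1))
      atTop (nhds 0) := by
  have htpos : ∀ᶠ n in atTop, 0 < t n := by
    filter_upwards [htp.eventually (eventually_gt_nhds ha)] with n hn
    nlinarith [(hp n).1]
  have habs : Tendsto (fun n => |t n * p n - t n * q n|) atTop (nhds 0) := by
    have : Tendsto (fun n => t n * p n - t n * q n) atTop (nhds (a - b)) := htp.sub htq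
    rw [hab, sub_self] at this
    simpa using this.abs
  apply tendsto_of_tendsto_of_tendsto_of_le_of_le' tendsto_const_nhds habs
  · filter_upwards [htpos] with n hn
    exact mul_nonneg hn.le (sSup_bounds (p n) (q n) (hp n) (hq n)).1
  · filter_upwards [htpos] with n hn
    calc t n * sSup ((fun x : ℝ => x * p n + (1 - x) * q n - (p n) ^ x * (q n) ^ (1 - x)) '' Icc 0 1)
        ≤ t n * |p n - q n| :=
          mul_le_mul_of_nonneg_left (sSup_bounds (p n) (q n) (hp n) (hq n)).2 hn.le
      _ = |t n * p n - t n * q n| := by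
          rw [← mul_sub, abs_mul, abs_of_pos hn]
end
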